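/- Let n, k be positive integers with 2k < n, M = 1 - 2k/n, and p(x) = (1+x)^{n-k}(1-x)^k. Then for every x ∈ [0, 1-M] one has p(M - x) ≥ p(M + x). -/

import Mathlib

lemma stmt_2_aux (km mm Mv t : ℝ) (hk : 0 < km) (hm : km < mm) (hM0 : 0 < Mv) (hM1 : Mv < 1)
    (hrel : km * (1 + Mv) = mm * (1 - Mv)) (ht0 : 0 ≤ t) (ht : t < 1 - Mv) :
    0 ≤ mm * ((0 - 1) / (1 + (Mv - t))) + km * ((0 - -1) / (1 - (Mv - t))) -
      (mm * ((0 + 1) / (1 + (Mv + t))) + km * ((0 - 1) / (1 - (Mv + t)))) := by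
  have d1 : (0:ℝ) < 1 + (Mv - t) := by linarith
  have d2 : (0:ℝ) < 1 - (Mv - t) := by linarith
  have d3 : (0:ℝ) < 1 + (Mv + t) := by linarith
  have d4 : (0:ℝ) < 1 - (Mv + t) := by linarith
  have key : mm * ((0 - 1) / (1 + (Mv - t))) + km * ((0 - -1) / (1 - (Mv - t))) -
      (mm * ((0 + 1) / (1 + (Mv + t))) + km * ((0 - 1) / (1 - (Mv + t)))) =
      (2 * t ^ 2 * (mm * (1 + Mv) - km * (1 - Mv)) +
        2 * (1 + Mv) * (1 - Mv) * (km * (1 + Mv) - mm * (1 - Mv))) /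
      ((1 + (Mv - t)) * (1 - (Mv - t)) * (1 + (Mv + t)) * (1 - (Mv + t))) := by
    field_simp
    ring
  rw [key]
  apply div_nonneg _ (by positivity)
  have h1 : mm * (1 + Mv) - km * (1 - Mv) ≥ 0 := by nlinarith
  have h2 : km * (1 + Mv) - mm * (1 - Mv) = 0 := by linarith
  rw [h2, mul_zero, add_zero]
  nlinarith [mul_nonneg (sq_nonneg t) h1]

/-- For `p(x) = (1+x)^(n-k) (1-x)^k`, `M = 1 - 2k/n`, one has
`p(M - x) ≥ p(M + x)` for all `x ∈ [0, 1-M]`. -/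
theorem stmt_2 (n k : ℕ) (hk : 0 < k) (hn : 2 * k < n)
    (p : ℝ → ℝ) (hp : ∀ x : ℝ, p x = (1 + x) ^ (n - k) * (1 - x) ^ k)
    (M : ℝ) (hM : M = 1 - 2 * (k : ℝ) / n) :
    ∀ x ∈ Set.Icc (0 : ℝ) (1 - M), p (M + x) ≤ p (M - x) := by
  intro x hx
  obtain ⟨hx0, hx1⟩ := hx
  have hn0 : (0:ℝ) < n := by
    have : 0 < n := by omega
    exact_mod_cast this
  have hk0 : (0:ℝ) < k := by exact_mod_cast hk
  have hkn : k ≤ n := by omega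
  have hmr : ((n - k : ℕ) : ℝ) = (n:ℝ) - k := by
    push_cast [Nat.cast_sub hkn]; ring
  have h2kn : (2:ℝ) * k < n := by exact_mod_cast hn
  have hM0 : 0 < M := by
    rw [hM]; rw [sub_pos, div_lt_one hn0]; linarith
  have hM1 : M < 1 := by
    rw [hM]; have : 0 < 2 * (k:ℝ) / n := by positivity
    linarith
  set m : ℕ := n - k with hmdef
  have hmr' : (m:ℝ) = (n:ℝ) - k := hmr
  have hm0 : (0:ℝ) < m := by rw [hmr']; linarith
  have hrel : (k:ℝ) * (1 + M) = (m:ℝ) * (1 - M) := by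
    rw [hmr', hM]; field_simp; ring
  have hmk : (k:ℝ) < m := by
    rw [hmr']; linarith
  rcases eq_or_lt_of_le hx1 with hxe | hxb
  · -- endpoint x = 1 - M : p (M+x) = p 1 = 0
    have h1 : 1 - (M + x) = 0 := by rw [hxe]; ring
    rw [hp, hp, h1, zero_pow hk.ne', mul_zero]
    have h2 : (0:ℝ) ≤ 1 + (M - x) := by rw [hxe]; linarith
    have h3 : (0:ℝ) ≤ 1 - (M - x) := by rw [hxe]; linarith
    positivity
  · -- main case : x < 1 - M
    set g : ℝ → ℝ := fun t =>
      (m:ℝ) * Real.log (1 + (M - t)) + k * Real.log (1 - (M - t)) -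
        ((m:ℝ) * Real.log (1 + (M + t)) + k * Real.log (1 - (M + t))) with hg
    have hderiv : ∀ t ∈ Set.Icc 0 x, HasDerivAt g
        ((m:ℝ) * ((0 - 1) / (1 + (M - t))) + (k:ℝ) * ((0 - -1) / (1 - (M - t))) -
          ((m:ℝ) * ((0 + 1) / (1 + (M + t))) + (k:ℝ) * ((0 - 1) / (1 - (M + t))))) t := by
      intro t ⟨ht0, htx⟩
      have d1 : (0:ℝ) < 1 + (M - t) := by linarith
      have d2 : (0:ℝ) < 1 - (M - t) := by linarith
      have d3 : (0:ℝ) < 1 + (M + t) := by linarith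
      have d4 : (0:ℝ) < 1 - (M + t) := by linarith
      have h1 : HasDerivAt (fun t : ℝ => 1 + (M - t)) (0 - 1) t :=
        (hasDerivAt_const t (1:ℝ)).add (((hasDerivAt_const t M).sub (hasDerivAt_id t))) |>.congr_deriv (by ring)
      have h2 : HasDerivAt (fun t : ℝ => 1 - (M - t)) (0 - -1) t := by
        have : HasDerivAt (fun t : ℝ => 1 - (M - t)) (0 - (0 - 1)) t := (hasDerivAt_const t (1:ℝ)).sub ((hasDerivAt_const t M).sub (hasDerivAt_id t))
        convert this using 1
        ring
      have h3 : HasDerivAt (fun t : ℝ => 1 + (M + t)) (0 + 1) t := by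
        have : HasDerivAt (fun t : ℝ => 1 + (M + t)) (0 + (0 + 1)) t := (hasDerivAt_const t (1:ℝ)).add ((hasDerivAt_const t M).add (hasDerivAt_id t))
        convert this using 1
        ring
      have h4 : HasDerivAt (fun t : ℝ => 1 - (M + t)) (0 - 1) t := by
        have : HasDerivAt (fun t : ℝ => 1 - (M + t)) (0 - (0 + 1)) t := (hasDerivAt_const t (1:ℝ)).sub ((hasDerivAt_const t M).add (hasDerivAt_id t))
        convert this using 1
        ring
      exact (((h1.log d1.ne').const_mul (m:ℝ)).add ((h2.log d2.ne').const_mul (k:ℝ))).sub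
        (((h3.log d3.ne').const_mul (m:ℝ)).add ((h4.log d4.ne').const_mul (k:ℝ)))
    have hmono : MonotoneOn g (Set.Icc 0 x) := by
      apply monotoneOn_of_deriv_nonneg (convex_Icc 0 x)
      · exact fun t ht => (hderiv t ht).continuousAt.continuousWithinAt
      · intro t ht
        rw [interior_Icc] at ht
        exact ((hderiv t (Set.mem_Icc_of_Ioo ht)).differentiableAt).differentiableWithinAt
      · intro t ht
        rw [interior_Icc] at ht
        obtain ⟨ht0, htx⟩ := ht
        rw [(hderiv t ⟨ht0.le, htx.le⟩).deriv]
        exact stmt_2_aux (k:ℝ) (m:ℝ) M t hk0 hmk hM0 hM1 hrel ht0.le (by linarith)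
    have hg0 : g 0 = 0 := by simp [hg]
    have hgx : 0 ≤ g x := by
      have := hmono (Set.left_mem_Icc.mpr hx0) (Set.right_mem_Icc.mpr hx0) hx0
      rwa [hg0] at this
    have d1 : (0:ℝ) < 1 + (M - x) := by linarith
    have d2 : (0:ℝ) < 1 - (M - x) := by linarith
    have d3 : (0:ℝ) < 1 + (M + x) := by linarith
    have d4 : (0:ℝ) < 1 - (M + x) := by linarith
    have key : (m:ℝ) * Real.log (1 + (M + x)) + k * Real.log (1 - (M + x)) ≤
        (m:ℝ) * Real.log (1 + (M - x)) + k * Real.log (1 - (M - x)) := by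
      rw [hg] at hgx; simp only at hgx; linarith
    have eexp : ∀ (y z : ℝ), 0 < y → 0 < z →
        Real.exp ((m:ℝ) * Real.log y + (k:ℝ) * Real.log z) = y ^ m * z ^ k := by
      intro y z hy hz
      rw [Real.exp_add, Real.exp_nat_mul, Real.exp_nat_mul, Real.exp_log hy, Real.exp_log hz]
    have hfin := Real.exp_le_exp.mpr key
    rw [eexp _ _ d3 d4, eexp _ _ d1 d2] at hfin
    rw [hp, hp]
    exact hfin
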